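/- arXiv:1809.01364 — 2 statements merged into one kernel-verified Lean document; each statement's English description precedes it below -/
import Mathlib

section
/- Knight's identity: for any real numbers u and v and any τ ∈ (0,1), ρ_τ(u − v) − ρ_τ(u) = v(1{u ≤ 0} − τ) + ∫₀^v (1{u ≤ t} − 1{u ≤ 0}) dt, where ρ_τ(x) = x(τ − 1{x < 0}). -/
open MeasureTheory intervalIntegral


lemma step_intble (u a b : ℝ) :
    IntervalIntegrable (fun t : ℝ => (if u ≤ t then (1:ℝ) else 0)) volume a b := by
  have h1 : (fun t : ℝ => (if u ≤ t then (1:ℝ) else 0))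
      = (Set.Ici u).indicator (fun _ => (1:ℝ)) := by
    ext t; simp [Set.indicator_apply, Set.mem_Ici]
  rw [h1]
  constructor <;>
    exact (MeasureTheory.integrableOn_const measure_Ioc_lt_top.ne).indicator
      measurableSet_Ici

lemma step_int_le {u a b : ℝ} (hab : a ≤ b) :
    ∫ t in a..b, (if u ≤ t then (1:ℝ) else 0) = max (b - u) 0 - max (a - u) 0 := by
  have h1 : (fun t : ℝ => (if u ≤ t then (1:ℝ) else 0))
      = (Set.Ici u).indicator (fun _ => (1:ℝ)) := by
    ext t; simp [Set.indicator_apply, Set.mem_Ici]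
  rw [intervalIntegral.integral_of_le hab]
  simp only [h1]
  rw [MeasureTheory.setIntegral_indicator measurableSet_Ici]
  rcases le_or_gt u a with h | h
  · have h2 : Set.Ioc a b ∩ Set.Ici u = Set.Ioc a b := by
      ext t; simp only [Set.mem_inter_iff, Set.mem_Ioc, Set.mem_Ici]
      constructor
      · tauto
      · intro ht; exact ⟨ht, le_trans h ht.1.le⟩
    rw [h2]
    simp [Real.volume_Ioc, ENNReal.toReal_ofReal (by linarith : (0:ℝ) ≤ b - a)]
    simp only [max_eq_left (by linarith : (0:ℝ) ≤ b - a), max_eq_left (by linarith : (0:ℝ) ≤ b - u), max_eq_left (by linarith : (0:ℝ) ≤ a - u)]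
    ring
  · rcases le_or_gt u b with h' | h'
    · have h2 : Set.Ioc a b ∩ Set.Ici u = Set.Icc u b := by
        ext t; simp only [Set.mem_inter_iff, Set.mem_Ioc, Set.mem_Icc, Set.mem_Ici]
        constructor
        · tauto
        · intro ht; exact ⟨⟨lt_of_lt_of_le h ht.1, ht.2⟩, ht.1⟩
      rw [h2]
      simp [Real.volume_Icc, ENNReal.toReal_ofReal (by linarith : (0:ℝ) ≤ b - u)]
      rw [max_eq_left (by linarith), max_eq_right (by linarith)]
      ring
    · have h2 : Set.Ioc a b ∩ Set.Ici u = ∅ := by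
        ext t; simp only [Set.mem_inter_iff, Set.mem_Ioc, Set.mem_Ici, Set.mem_empty_iff_false]
        constructor
        · rintro ⟨⟨_, h2⟩, h3⟩; linarith
        · exact False.elim
      rw [h2]
      simp
      rw [max_eq_right (by linarith), max_eq_right (by linarith)]
      ring

lemma step_int (u a b : ℝ) :
    ∫ t in a..b, (if u ≤ t then (1:ℝ) else 0) = max (b - u) 0 - max (a - u) 0 := by
  rcases le_total a b with h | h
  · exact step_int_le h
  · rw [intervalIntegral.integral_symm, step_int_le h]; ring

/-- Knight's identity for the quantile check loss
`ρ_τ(x) = x (τ - 1{x < 0})`. -/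
theorem knight_identity (τ u v : ℝ) (hτ : τ ∈ Set.Ioo (0:ℝ) 1) :
    (u - v) * (τ - (if u - v < 0 then (1:ℝ) else 0)) - u * (τ - (if u < 0 then (1:ℝ) else 0))
      = v * ((if u ≤ 0 then (1:ℝ) else 0) - τ)
        + ∫ t in (0:ℝ)..v, ((if u ≤ t then (1:ℝ) else 0) - (if u ≤ 0 then (1:ℝ) else 0)) := by
  rw [intervalIntegral.integral_sub (step_intble u 0 v) intervalIntegrable_const,
    intervalIntegral.integral_const, step_int]
  have hm1 : max (v - u) 0 = if u - v < 0 then v - u else 0 := by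
    rcases lt_or_ge (u - v) 0 with h | h
    · rw [if_pos h, max_eq_left (by linarith)]
    · rw [if_neg (not_lt.2 h), max_eq_right (by linarith)]
  have hm2 : max (0 - u) 0 = if u < 0 then -u else 0 := by
    rcases lt_or_ge u 0 with h | h
    · rw [if_pos h, max_eq_left (by linarith)]; ring
    · rw [if_neg (not_lt.2 h), max_eq_right (by linarith)]
  rw [hm1, hm2]
  simp only [smul_eq_mul, sub_zero]
  split_ifs <;> ring_nf <;> linarith
end

section
/- Suppose Lₙ : ℝ^d → ℝ are convex functions and L(θ) = (1/2)θᵀSθ is a positive definite quadratic, such that Lₙ(θ) − Wₙᵀθ → L(θ) in probability pointwise for a tight sequence of random vectors Wₙ; then the convergence Lₙ(θ) − Wₙᵀθ → L(θ) holds uniformly over any compact subset of ℝ^d. (Deterministic version: if convex functions gₙ : ℝ^d → ℝ converge pointwise to a continuous function g, then the convergence is uniform on compact sets.) -/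
open Metric Set Filter

/-- Uniform local Lipschitz bound for a pointwise convergent sequence of convex
functions on a finite dimensional space. -/
lemma convexity_lemma_aux {E : Type*} [NormedAddCommGroup E] [NormedSpace ℝ E]
    [FiniteDimensional ℝ E] (g : ℕ → E → ℝ) (glim : E → ℝ)
    (hconv : ∀ n, ConvexOn ℝ Set.univ (g n))
    (hpt : ∀ x, Filter.Tendsto (fun n => g n x) Filter.atTop (nhds (glim x)))
    (x₀ : E) :
    ∃ r > 0, ∃ C : NNReal, ∀ n, LipschitzOnWith C (g n) (Metric.ball x₀ r) := by
  obtain ⟨b, hx₀int, -⟩ :=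
    exists_mem_interior_convexHull_affineBasis (x := x₀) (s := (Set.univ : Set E))
      Filter.univ_mem
  obtain ⟨R, hR, hRsub⟩ := Metric.mem_nhds_iff.1 (isOpen_interior.mem_nhds hx₀int)
  have hball : Metric.ball x₀ R ⊆ convexHull ℝ (Set.range b) :=
    hRsub.trans interior_subset
  -- uniform upper bound on the vertices
  have hup : ∀ i, ∃ M : ℝ, ∀ n, g n (b i) ≤ M := by
    intro i
    obtain ⟨M, hM⟩ := (hpt (b i)).bddAbove_range
    exact ⟨M, fun n => hM (Set.mem_range_self n)⟩
  choose M hM using hup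
  have hne : (Finset.univ : Finset (Fin (Module.finrank ℝ E + 1))).Nonempty :=
    Finset.univ_nonempty
  set Mup : ℝ := Finset.univ.sup' hne M with hMup
  have hMup' : ∀ i n, g n (b i) ≤ Mup := fun i n =>
    (hM i n).trans (Finset.le_sup' M (Finset.mem_univ i))
  have hhullup : ∀ n, ∀ y ∈ convexHull ℝ (Set.range b), g n y ≤ Mup := by
    intro n y hy
    obtain ⟨z, hz, hzy⟩ := (hconv n).exists_ge_of_mem_convexHull (Set.subset_univ _) hy
    obtain ⟨i, rfl⟩ := hz
    exact hzy.trans (hMup' i n)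
  -- lower bound at the center
  obtain ⟨m₀, hm₀⟩ := (hpt x₀).bddBelow_range
  have hm₀' : ∀ n, m₀ ≤ g n x₀ := fun n => hm₀ (Set.mem_range_self n)
  set Mabs : ℝ := |Mup| + 2 * |m₀| with hMabs
  have habs : ∀ n, ∀ a, dist a x₀ < R → |g n a| ≤ Mabs := by
    intro n a ha
    have haball : a ∈ Metric.ball x₀ R := Metric.mem_ball.2 ha
    have hupper : g n a ≤ Mup := hhullup n a (hball haball)
    set z : E := x₀ + (x₀ - a) with hz
    have hzball : z ∈ Metric.ball x₀ R := by
      rw [Metric.mem_ball, dist_eq_norm]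
      have : z - x₀ = x₀ - a := by rw [hz]; abel
      rw [this, ← dist_eq_norm, dist_comm]
      exact ha
    have hzup : g n z ≤ Mup := hhullup n z (hball hzball)
    have hmid : (2:ℝ)⁻¹ • a + (2:ℝ)⁻¹ • z = x₀ := by
      rw [hz]; module
    have h2 := (hconv n).2 (Set.mem_univ a) (Set.mem_univ z)
      (by norm_num : (0:ℝ) ≤ (2:ℝ)⁻¹) (by norm_num : (0:ℝ) ≤ (2:ℝ)⁻¹) (by norm_num)
    rw [hmid] at h2
    simp only [smul_eq_mul] at h2
    have hlower : 2 * m₀ - Mup ≤ g n a := by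
      have := hm₀' n
      linarith
    rw [abs_le]
    constructor
    · linarith [le_abs_self Mup, neg_abs_le m₀, hlower, hMabs]
    · linarith [le_abs_self Mup, abs_nonneg m₀, hMabs]
  refine ⟨R/2, by positivity, (2 * Mabs / (R/2)).toNNReal, fun n => ?_⟩
  have hconvball : ConvexOn ℝ (Metric.ball x₀ R) (g n) :=
    (hconv n).subset (Set.subset_univ _) (convex_ball x₀ R)
  have := hconvball.lipschitzOnWith_of_abs_le (ε := R/2) (by positivity) (habs n)
  have hR2 : R - R/2 = R/2 := by ring
  rwa [hR2] at this

/-- Pollard's convexity lemma (deterministic version): if convex functions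
`gₙ : ℝ^d → ℝ` converge pointwise to a continuous function `g`, the
convergence is uniform on every compact set. -/
theorem convexity_lemma (d : ℕ) (g : ℕ → (EuclideanSpace ℝ (Fin d)) → ℝ)
    (glim : EuclideanSpace ℝ (Fin d) → ℝ)
    (hconv : ∀ n, ConvexOn ℝ Set.univ (g n))
    (hcont : Continuous glim)
    (hpt : ∀ x, Filter.Tendsto (fun n => g n x) Filter.atTop (nhds (glim x))) :
    ∀ K : Set (EuclideanSpace ℝ (Fin d)), IsCompact K →
      TendstoUniformlyOn g glim Filter.atTop K := by
  intro K hK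
  rw [Metric.tendstoUniformlyOn_iff]
  intro ε hε
  have hε3 : 0 < ε / 3 := by positivity
  -- at each point, a ball on which everything is controlled
  have key : ∀ x : EuclideanSpace ℝ (Fin d), ∃ ρ > 0, ∃ C : NNReal,
      (∀ n, LipschitzOnWith C (g n) (Metric.ball x ρ)) ∧
      (∀ y, dist y x < ρ → dist (glim y) (glim x) < ε / 3) ∧
      (C : ℝ) * ρ ≤ ε / 3 := by
    intro x
    obtain ⟨r, hr, C, hlip⟩ := convexity_lemma_aux g glim hconv hpt x
    obtain ⟨δ, hδ, hδ'⟩ := Metric.continuous_iff.1 hcont x (ε / 3) hε3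
    refine ⟨min (min r δ) (ε / (3 * ((C : ℝ) + 1))), by positivity, C, ?_, ?_, ?_⟩
    · intro n
      exact (hlip n).mono (Metric.ball_subset_ball ((min_le_left _ _).trans (min_le_left _ _)))
    · intro y hy
      exact hδ' y (lt_of_lt_of_le hy ((min_le_left _ _).trans (min_le_right _ _)))
    · have h1 : min (min r δ) (ε / (3 * ((C : ℝ) + 1))) ≤ ε / (3 * ((C : ℝ) + 1)) :=
        min_le_right _ _
      have hC : (0:ℝ) ≤ (C : ℝ) := C.coe_nonneg
      have h2 : (C : ℝ) * min (min r δ) (ε / (3 * ((C : ℝ) + 1)))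
          ≤ (C : ℝ) * (ε / (3 * ((C : ℝ) + 1))) := by
        exact mul_le_mul_of_nonneg_left h1 hC
      refine h2.trans ?_
      rw [mul_div_assoc', div_le_div_iff₀ (by positivity) (by norm_num)]
      nlinarith [hε.le]
  choose ρ hρ C hlip hcts hCρ using key
  obtain ⟨t, htK, hcover⟩ := hK.elim_nhds_subcover (fun x => Metric.ball x (ρ x))
    (fun x _ => Metric.ball_mem_nhds x (hρ x))
  have hev : ∀ᶠ n in Filter.atTop, ∀ x ∈ t, dist (g n x) (glim x) < ε / 3 := by
    rw [Filter.eventually_all_finset]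
    intro x _
    exact Metric.tendsto_nhds.1 (hpt x) (ε / 3) hε3
  filter_upwards [hev] with n hn y hy
  obtain ⟨x, hxt, hyx⟩ := Set.mem_iUnion₂.1 (hcover hy)
  have hyx' : dist y x < ρ x := Metric.mem_ball.1 hyx
  have hd1 : dist (glim y) (glim x) < ε / 3 := hcts x y hyx'
  have hd2 : dist (glim x) (g n x) < ε / 3 := by rw [dist_comm]; exact hn x hxt
  have hd3 : dist (g n x) (g n y) ≤ ε / 3 := by
    have hxmem : x ∈ Metric.ball x (ρ x) := Metric.mem_ball_self (hρ x)
    have hymem : y ∈ Metric.ball x (ρ x) := hyx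
    have := (hlip x n).dist_le_mul x hxmem y hymem
    have hdxy : dist x y ≤ ρ x := by rw [dist_comm]; exact hyx'.le
    calc dist (g n x) (g n y) ≤ (C x : ℝ) * dist x y := this
      _ ≤ (C x : ℝ) * ρ x := mul_le_mul_of_nonneg_left hdxy (C x).coe_nonneg
      _ ≤ ε / 3 := hCρ x
  calc dist (glim y) (g n y)
      ≤ dist (glim y) (glim x) + dist (glim x) (g n x) + dist (g n x) (g n y) :=
        dist_triangle4 _ _ _ _
    _ < ε / 3 + ε / 3 + ε / 3 := by
        apply add_lt_add_of_lt_of_le (add_lt_add hd1 hd2) hd3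
    _ = ε := by ring
end
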